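/- arXiv:2310.02023 — 4 statements merged into one kernel-verified Lean document; each statement's English description precedes it below -/
import Mathlib

section
/- Any random variable X taking values in [0, B] (with B > 0) with mean μ = E[X] satisfies, for every real λ, the moment generating function bound E[exp(λX)] ≤ exp((μ/B)(exp(Bλ) − 1)). That is, X is B-sub-Poisson. -/
open MeasureTheory

/-- Any random variable `X` taking values in `[0, B]` (with `B > 0`) with mean
`μ = E[X]` is `B`-sub-Poisson: for every real `λ`,
`E[exp(λ X)] ≤ exp((μ/B) (exp(B λ) − 1))`. -/
theorem bounded_is_sub_poisson
    {Ω : Type*} [MeasurableSpace Ω] (P : Measure Ω) [IsProbabilityMeasure P]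
    (X : Ω → ℝ) (hX : Measurable X)
    (B : ℝ) (hB : 0 < B) (hbdd : ∀ ω, X ω ∈ Set.Icc 0 B)
    (μ : ℝ) (hμ : μ = ∫ ω, X ω ∂P) :
    ∀ l : ℝ, ∫ ω, Real.exp (l * X ω) ∂P ≤ Real.exp ((μ / B) * (Real.exp (B * l) - 1)) := by
  intro l
  have hXint : Integrable X P := by
    refine (integrable_const B).mono' hX.aestronglyMeasurable (ae_of_all _ fun ω => ?_)
    rw [Real.norm_eq_abs, abs_of_nonneg (hbdd ω).1]; exact (hbdd ω).2
  have hexpint : Integrable (fun ω => Real.exp (l * X ω)) P := by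
    refine (integrable_const (Real.exp (|l| * B))).mono'
      ((Real.measurable_exp.comp (measurable_const.mul hX)).aestronglyMeasurable)
      (ae_of_all _ fun ω => ?_)
    rw [Real.norm_eq_abs, abs_of_nonneg (Real.exp_pos _).le]
    apply Real.exp_le_exp.mpr
    calc l * X ω ≤ |l * X ω| := le_abs_self _
      _ = |l| * |X ω| := abs_mul _ _
      _ = |l| * X ω := by rw [abs_of_nonneg (hbdd ω).1]
      _ ≤ |l| * B := by
          exact mul_le_mul_of_nonneg_left (hbdd ω).2 (abs_nonneg l)
  have key : ∀ ω, Real.exp (l * X ω) ≤ 1 + (X ω / B) * (Real.exp (B * l) - 1) := by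
    intro ω
    set t := X ω / B with ht
    have ht0 : 0 ≤ t := div_nonneg (hbdd ω).1 hB.le
    have ht1 : t ≤ 1 := (div_le_one hB).mpr (hbdd ω).2
    have hc := convexOn_exp.2 (Set.mem_univ (0 : ℝ)) (Set.mem_univ (B * l))
      (by linarith : (0:ℝ) ≤ 1 - t) ht0 (by ring)
    simp only [smul_eq_mul, mul_zero, zero_add, Real.exp_zero, mul_one] at hc
    have harg : t * (B * l) = l * X ω := by
      rw [ht, ← mul_assoc, div_mul_cancel₀ _ hB.ne']
      ring
    rw [harg] at hc
    linarith
  have hg : Integrable (fun ω => 1 + (X ω / B) * (Real.exp (B * l) - 1)) P := by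
    apply (integrable_const (1:ℝ)).add
    exact (hXint.div_const B).mul_const _
  calc ∫ ω, Real.exp (l * X ω) ∂P
      ≤ ∫ ω, 1 + (X ω / B) * (Real.exp (B * l) - 1) ∂P :=
        integral_mono hexpint hg key
    _ = 1 + (μ / B) * (Real.exp (B * l) - 1) := by
        rw [integral_add (integrable_const _) ((hXint.div_const B).mul_const _),
          integral_const, integral_mul_const, integral_div]
        simp [hμ]
    _ ≤ Real.exp ((μ / B) * (Real.exp (B * l) - 1)) := by
        have := Real.add_one_le_exp ((μ / B) * (Real.exp (B * l) - 1))
        linarith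
end

section
/- Let X be a non-negative random variable with mean μ = E[X] > 0 that is σ-sub-Gaussian, i.e., E[exp(sX)] ≤ exp(sμ + s²σ²/2) for all s ∈ ℝ. Then for every s ≥ 0, E[exp(sX)] ≤ exp((μ²/σ²)(exp(sσ²/μ) − 1)). -/
open MeasureTheory

/-- If `X ≥ 0` has mean `μ = E[X] > 0` and is `σ`-sub-Gaussian, i.e.
`E[exp(s X)] ≤ exp(s μ + s² σ² / 2)` for all real `s`, then for every `s ≥ 0`,
`E[exp(s X)] ≤ exp((μ²/σ²) (exp(s σ²/μ) − 1))`. -/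
theorem subgaussian_is_sub_poisson_nonneg
    {Ω : Type*} [MeasurableSpace Ω] (P : Measure Ω) [IsProbabilityMeasure P]
    (X : Ω → ℝ) (hXnn : ∀ ω, 0 ≤ X ω)
    (μ σ : ℝ) (hσ : 0 < σ) (hμ : μ = ∫ ω, X ω ∂P) (hμpos : 0 < μ)
    (hsubg : ∀ s : ℝ, ∫ ω, Real.exp (s * X ω) ∂P ≤ Real.exp (s * μ + s ^ 2 * σ ^ 2 / 2)) :
    ∀ s : ℝ, 0 ≤ s →
      ∫ ω, Real.exp (s * X ω) ∂P ≤
        Real.exp ((μ ^ 2 / σ ^ 2) * (Real.exp (s * σ ^ 2 / μ) - 1)) := by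
  intro s hs
  refine (hsubg s).trans (Real.exp_le_exp.2 ?_)
  set x := s * σ ^ 2 / μ with hx
  have hxnn : 0 ≤ x := by positivity
  have hq := Real.quadratic_le_exp_of_nonneg hxnn
  have hσ2 : (0:ℝ) < σ ^ 2 := by positivity
  have key : s * μ + s ^ 2 * σ ^ 2 / 2 = (μ ^ 2 / σ ^ 2) * (x + x ^ 2 / 2) := by
    rw [hx]
    field_simp
  rw [key]
  have h2 : x + x ^ 2 / 2 ≤ Real.exp x - 1 := by linarith
  exact mul_le_mul_of_nonneg_left h2 (by positivity)
end

section
/- Let K ⊆ ℝᵈ be a convex set, c ∈ ℝᵈ, and H a positive-definite symmetric d×d matrix such that the ellipsoid {x : (x−c)ᵀH(x−c) ≤ 1} is contained in K and K is contained in {x : (x−c)ᵀH(x−c) ≤ d²}. Suppose θ* ∈ ℝᵈ satisfies ⟨x, θ*⟩ ≥ 0 for all x ∈ K. Then for every x* ∈ K, ⟨c, θ*⟩ ≥ ⟨x*, θ*⟩/(d + 1). -/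
open Matrix

/-- John-ellipsoid reward bound: if the ellipsoid `{x : (x−c)ᵀH(x−c) ≤ 1}` is
contained in a convex set `K`, `K ⊆ {x : (x−c)ᵀH(x−c) ≤ d²}`, and `⟨x, θ*⟩ ≥ 0`
for all `x ∈ K`, then for every `x* ∈ K`, `⟨c, θ*⟩ ≥ ⟨x*, θ*⟩ / (d + 1)`. -/
theorem john_center_reward_bound (d : ℕ) (hd : 1 ≤ d)
    (K : Set (Fin d → ℝ)) (hK : Convex ℝ K)
    (c θstar : Fin d → ℝ) (H : Matrix (Fin d) (Fin d) ℝ) (hH : H.PosDef)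
    (hinner : {x : Fin d → ℝ | dotProduct (x - c) (H.mulVec (x - c)) ≤ 1} ⊆ K)
    (houter : K ⊆ {x : Fin d → ℝ | dotProduct (x - c) (H.mulVec (x - c)) ≤ (d : ℝ) ^ 2})
    (hθ : ∀ x ∈ K, 0 ≤ dotProduct x θstar)
    (xstar : Fin d → ℝ) (hx : xstar ∈ K) :
    dotProduct xstar θstar / ((d : ℝ) + 1) ≤ dotProduct c θstar := by
  have hd0 : (0:ℝ) < d := by exact_mod_cast hd
  set y : Fin d → ℝ := c - (d:ℝ)⁻¹ • (xstar - c) with hy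
  have hyc : y - c = (-(d:ℝ)⁻¹) • (xstar - c) := by
    simp only [hy]; module
  have hxe : dotProduct (xstar - c) (H.mulVec (xstar - c)) ≤ (d:ℝ)^2 := houter hx
  have hyK : y ∈ K := by
    apply hinner
    have key : dotProduct (y - c) (H.mulVec (y - c))
        = ((d:ℝ)^2)⁻¹ * dotProduct (xstar - c) (H.mulVec (xstar - c)) := by
      rw [hyc, smul_dotProduct, mulVec_smul, dotProduct_smul, smul_eq_mul, smul_eq_mul]
      ring
    show dotProduct (y - c) (H.mulVec (y - c)) ≤ 1
    rw [key, inv_mul_le_iff₀ (by positivity : (0:ℝ) < (d:ℝ)^2)]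
    linarith
  have hydot : 0 ≤ dotProduct y θstar := hθ y hyK
  have hexp : dotProduct y θstar
      = dotProduct c θstar - (d:ℝ)⁻¹ * (dotProduct xstar θstar - dotProduct c θstar) := by
    simp [hy, sub_dotProduct, smul_dotProduct, smul_eq_mul]
  rw [hexp, sub_nonneg, inv_mul_le_iff₀ hd0] at hydot
  rw [div_le_iff₀ (by positivity)]
  linarith
end

section
/- Let K ⊆ ℝᵈ be convex, c ∈ ℝᵈ, H positive-definite with {x : (x−c)ᵀH(x−c) ≤ 1} ⊆ K, and let x* ∈ K satisfy (x*−c)ᵀH(x*−c) ≤ d². Then the point y = c − (x* − c)/d lies in K. -/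
open Matrix

/-- If the ellipsoid `{x : (x−c)ᵀH(x−c) ≤ 1}` is contained in a convex set `K`
and `x* ∈ K` satisfies `(x*−c)ᵀH(x*−c) ≤ d²`, then `y = c − (x* − c)/d ∈ K`. -/
theorem john_reflected_point_mem (d : ℕ) (hd : 1 ≤ d)
    (K : Set (Fin d → ℝ)) (hK : Convex ℝ K)
    (c : Fin d → ℝ) (H : Matrix (Fin d) (Fin d) ℝ) (hH : H.PosDef)
    (hinner : {x : Fin d → ℝ | dotProduct (x - c) (H.mulVec (x - c)) ≤ 1} ⊆ K)
    (xstar : Fin d → ℝ) (hx : xstar ∈ K)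
    (hxell : dotProduct (xstar - c) (H.mulVec (xstar - c)) ≤ (d : ℝ) ^ 2) :
    c - ((d : ℝ)⁻¹) • (xstar - c) ∈ K := by
  apply hinner
  have hd0 : (0 : ℝ) < (d : ℝ) := by exact_mod_cast hd
  have hv : (c - ((d : ℝ)⁻¹) • (xstar - c)) - c = (-(d : ℝ)⁻¹) • (xstar - c) := by
    simp [neg_smul, sub_eq_add_neg]; abel
  simp only [Set.mem_setOf_eq, hv, mulVec_smul, dotProduct_smul, smul_dotProduct,
    smul_eq_mul]
  have h2 : (-(d : ℝ)⁻¹) * ((-(d : ℝ)⁻¹) * dotProduct (xstar - c) (H.mulVec (xstar - c)))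
      = ((d : ℝ)⁻¹)^2 * dotProduct (xstar - c) (H.mulVec (xstar - c)) := by ring
  rw [h2]
  have : ((d : ℝ)⁻¹)^2 * dotProduct (xstar - c) (H.mulVec (xstar - c))
      ≤ ((d : ℝ)⁻¹)^2 * (d : ℝ)^2 := by
    apply mul_le_mul_of_nonneg_left hxell (by positivity)
  calc _ ≤ ((d : ℝ)⁻¹)^2 * (d : ℝ)^2 := this
    _ = 1 := by field_simp
end
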